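/- Let G : ℝ^p → ℝ be differentiable with L₀-Lipschitz gradient, f : ℝ^p → ℝ^n C¹ with ‖J_θ f(θ)‖ ≤ M everywhere, and α, β > 0 with 4α²βM²L₀ < 1. Define θ(y) = θ₀ − 2αJ_θf(θ₀)ᵀ(f(θ₀) − y), H(y) = G(θ(y)), ỹ = f(θ₀), and ŷ = ỹ − β∇H(ỹ). Then G(θ(ŷ)) ≤ G(θ(ỹ)) = G(θ₀), with equality iff ∇H(ỹ) = 0. -/

import Mathlib

open intervalIntegral

lemma descent {E : Type*} [NormedAddCommGroup E] [InnerProductSpace ℝ E] [CompleteSpace E]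
    (G : E → ℝ) (L : ℝ) (hG : Differentiable ℝ G)
    (hLip : ∀ a b, ‖gradient G a - gradient G b‖ ≤ L * ‖a - b‖)
    (x v : E) :
    G (x + v) ≤ G x + inner ℝ (gradient G x) v + L / 2 * ‖v‖ ^ 2 := by
  set φ' : ℝ → ℝ := fun t => inner ℝ (gradient G (x + t • v)) v with hφ'
  have hgradcont : Continuous (gradient G) := by
    refine (LipschitzWith.of_dist_le_mul (K := ‖L‖₊) fun a b => ?_).continuous
    simp only [dist_eq_norm]
    refine (hLip a b).trans ?_
    rw [coe_nnnorm, Real.norm_eq_abs]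
    exact mul_le_mul_of_nonneg_right (le_abs_self L) (norm_nonneg _)
  have hcont : Continuous φ' := by
    apply Continuous.inner
    · exact hgradcont.comp (by continuity)
    · exact continuous_const
  have hderiv : ∀ t : ℝ, HasDerivAt (fun t => G (x + t • v)) (φ' t) t := by
    intro t
    have h1 : HasDerivAt (fun t : ℝ => x + t • v) v t := by
      simpa using ((hasDerivAt_id t).smul_const v).const_add x
    have h2 : HasFDerivAt G
        ((InnerProductSpace.toDual ℝ E) (gradient G (x + t • v))) (x + t • v) :=
      (hG (x + t • v)).hasGradientAt
    have := h2.comp_hasDerivAt t h1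
    simpa [hφ', InnerProductSpace.toDual_apply_apply, Function.comp_def] using this
  have hint : ∫ t in (0:ℝ)..1, φ' t = G (x + v) - G x := by
    have := intervalIntegral.integral_eq_sub_of_hasDerivAt
      (f := fun t => G (x + t • v)) (fun t _ => hderiv t) (hcont.intervalIntegrable 0 1)
    simpa using this
  have hbound : ∀ t ∈ Set.Icc (0:ℝ) 1, φ' t ≤ inner ℝ (gradient G x) v + L * t * ‖v‖ ^ 2 := by
    intro t ht
    have h1 : φ' t - inner ℝ (gradient G x) v
        = inner ℝ (gradient G (x + t • v) - gradient G x) v := by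
      rw [inner_sub_left]
    have h2 : inner ℝ (gradient G (x + t • v) - gradient G x) v
        ≤ ‖gradient G (x + t • v) - gradient G x‖ * ‖v‖ := real_inner_le_norm _ _
    have h3 : ‖gradient G (x + t • v) - gradient G x‖ ≤ L * (t * ‖v‖) := by
      have := hLip (x + t • v) x
      simpa [norm_smul, abs_of_nonneg ht.1] using this
    nlinarith [norm_nonneg v, norm_nonneg (gradient G (x + t • v) - gradient G x), ht.1]
  have hle : ∫ t in (0:ℝ)..1, φ' t
      ≤ ∫ t in (0:ℝ)..1, (inner ℝ (gradient G x) v + L * t * ‖v‖ ^ 2) := by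
    apply intervalIntegral.integral_mono_on (by norm_num)
      (hcont.intervalIntegrable 0 1)
      ((by continuity : Continuous fun t : ℝ => (inner ℝ (gradient G x) v : ℝ) + L * t * ‖v‖ ^ 2).intervalIntegrable 0 1)
    exact hbound
  have hval : ∫ t in (0:ℝ)..1, ((inner ℝ (gradient G x) v : ℝ) + L * t * ‖v‖ ^ 2)
      = inner ℝ (gradient G x) v + L / 2 * ‖v‖ ^ 2 := by
    rw [intervalIntegral.integral_add (intervalIntegrable_const)
      (by apply Continuous.intervalIntegrable; continuity)]
    rw [intervalIntegral.integral_const,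
      show (fun t : ℝ => L * t * ‖v‖^2) = fun t : ℝ => (L * ‖v‖^2) * t from funext fun t => by ring,
      intervalIntegral.integral_const_mul, integral_id]
    simp only [smul_eq_mul]
    ring
  have : G (x + v) - G x ≤ inner ℝ (gradient G x) v + L / 2 * ‖v‖ ^ 2 := by
    rw [← hval]
    calc G (x + v) - G x = ∫ t in (0:ℝ)..1, φ' t := hint.symm
      _ ≤ _ := hle
  linarith

private lemma arith_aux (α β M L₀ : ℝ) (hα : 0 < α) (hβ : 0 < β)
    (hαβ : 4 * α ^ 2 * β * M ^ 2 * L₀ < 1)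
    (g0 gv r w : ℝ) (hr : 0 ≤ r) (hw : 0 ≤ w)
    (hwle : w ≤ 4 * α ^ 2 * β * (M * r))
    (hineq : gv ≤ g0 + -(4 * α ^ 2 * β) * r ^ 2 + L₀ / 2 * w ^ 2) :
    gv ≤ g0 - 2 * α ^ 2 * β * r ^ 2 := by
  have h5 : 0 ≤ 2 * α ^ 2 * β * r ^ 2 := by positivity
  rcases le_or_gt 0 L₀ with hL | hL
  · have h2 : w ^ 2 ≤ (4 * α ^ 2 * β * (M * r)) ^ 2 := pow_le_pow_left₀ hw hwle 2
    have h3 : L₀ / 2 * w ^ 2 ≤ L₀ / 2 * (4 * α ^ 2 * β * (M * r)) ^ 2 :=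
      mul_le_mul_of_nonneg_left h2 (by linarith)
    have h4 : L₀ / 2 * (4 * α ^ 2 * β * (M * r)) ^ 2 ≤ 2 * α ^ 2 * β * r ^ 2 := by
      nlinarith [mul_le_mul_of_nonneg_left hαβ.le h5]
    linarith
  · have h3 : L₀ / 2 * w ^ 2 ≤ 0 := by nlinarith [sq_nonneg w]
    linarith


/-- Single-example version of Theorem 1: one meta-gradient update
of the pseudo label decreases the validation loss G when 4α²βM²L₀ < 1, with
equality iff ∇H(ỹ) = 0. Here θ(y) = θ₀ − 2αJ_θf(θ₀)ᵀ(f(θ₀) − y), H = G ∘ θ,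
ỹ = f(θ₀), ŷ = ỹ − β∇H(ỹ). -/
theorem stmt_16 (p n : ℕ) (G : EuclideanSpace ℝ (Fin p) → ℝ)
    (f : EuclideanSpace ℝ (Fin p) → EuclideanSpace ℝ (Fin n)) (L₀ M α β : ℝ)
    (hG : Differentiable ℝ G)
    (hGLip : ∀ a b, ‖gradient G a - gradient G b‖ ≤ L₀ * ‖a - b‖)
    (hf : ContDiff ℝ 1 f) (hM : ∀ θ', ‖fderiv ℝ f θ'‖ ≤ M)
    (hα : 0 < α) (hβ : 0 < β) (hαβ : 4 * α ^ 2 * β * M ^ 2 * L₀ < 1)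
    (θ₀ : EuclideanSpace ℝ (Fin p))
    (θ : EuclideanSpace ℝ (Fin n) → EuclideanSpace ℝ (Fin p))
    (hθ : θ = fun y => θ₀ - (2 * α) • (ContinuousLinearMap.adjoint (fderiv ℝ f θ₀)) (f θ₀ - y))
    (H : EuclideanSpace ℝ (Fin n) → ℝ) (hH : H = fun y => G (θ y))
    (ytil yhat : EuclideanSpace ℝ (Fin n)) (hytil : ytil = f θ₀)
    (hyhat : yhat = ytil - β • gradient H ytil) :
    G (θ yhat) ≤ G (θ ytil) ∧ G (θ ytil) = G θ₀ ∧
      (G (θ yhat) = G θ₀ ↔ gradient H ytil = 0) := by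
  set A := fderiv ℝ f θ₀ with hA
  set u := A (gradient G θ₀) with hu
  -- θ ytil = θ₀
  have hθytil : θ ytil = θ₀ := by
    rw [hθ, hytil]; simp
  set T : EuclideanSpace ℝ (Fin n) →L[ℝ] EuclideanSpace ℝ (Fin p) :=
    (2 * α) • (ContinuousLinearMap.adjoint A) with hT
  have hθalt : θ = fun y => (θ₀ - (2 * α) • (ContinuousLinearMap.adjoint A) (f θ₀)) + T y := by
    rw [hθ]; funext y
    simp only [map_sub, smul_sub, hT, ContinuousLinearMap.smul_apply]
    abel
  have hθder : ∀ y, HasFDerivAt θ T y := by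
    intro y
    rw [hθalt]
    exact (T.hasFDerivAt).const_add _
  -- gradient of H at ytil
  have hgradH : gradient H ytil = (2 * α) • u := by
    have hGgrad : HasFDerivAt G
        ((InnerProductSpace.toDual ℝ _) (gradient G θ₀)) θ₀ := (hG θ₀).hasGradientAt
    have hGgrad' : HasFDerivAt G
        ((InnerProductSpace.toDual ℝ _) (gradient G θ₀)) (θ ytil) := by
      rw [hθytil]; exact hGgrad
    have hcomp : HasFDerivAt H
        (((InnerProductSpace.toDual ℝ _) (gradient G θ₀)).comp T) ytil := by
      rw [hH]
      exact hGgrad'.comp ytil (hθder ytil)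
    have heq : ((InnerProductSpace.toDual ℝ _) (gradient G θ₀)).comp T
        = (InnerProductSpace.toDual ℝ _) ((2 * α) • u) := by
      ext w
      simp only [ContinuousLinearMap.coe_comp', Function.comp_apply,
        InnerProductSpace.toDual_apply_apply, hT, ContinuousLinearMap.smul_apply]
      rw [real_inner_smul_right, real_inner_smul_left, hu,
        ContinuousLinearMap.adjoint_inner_right]
    have hgr : HasGradientAt H ((2 * α) • u) ytil := by
      rw [hasGradientAt_iff_hasFDerivAt, ← heq]
      exact hcomp
    exact hgr.gradient
  -- θ yhat = θ₀ + v where v = -(4α²β) • A† u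
  set v : EuclideanSpace ℝ (Fin p) :=
    -((4 * α ^ 2 * β) • (ContinuousLinearMap.adjoint A) u) with hv
  have hθyhat : θ yhat = θ₀ + v := by
    rw [hθ, hyhat, hgradH, hytil, hv]
    beta_reduce
    have h1 : f θ₀ - (f θ₀ - β • (2 * α) • u) = (2 * α * β) • u := by
      rw [sub_sub_cancel, smul_smul, mul_comm]
    rw [h1, map_smul, smul_smul, sub_eq_add_neg]
    have h2 : 2 * α * (2 * α * β) = 4 * α ^ 2 * β := by ring
    rw [h2]
  -- M ≥ 0
  have hM0 : 0 ≤ M := le_trans (norm_nonneg A) (hM θ₀)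
  -- inner product of gradient with v
  have hinner : (inner ℝ (gradient G θ₀) v : ℝ) = -(4 * α ^ 2 * β) * ‖u‖ ^ 2 := by
    rw [hv, inner_neg_right, real_inner_smul_right,
      ContinuousLinearMap.adjoint_inner_right, ← hu, real_inner_self_eq_norm_sq]
    ring
  -- bound on ‖v‖
  have hAadjnorm : ‖ContinuousLinearMap.adjoint A‖ = ‖A‖ :=
    ContinuousLinearMap.adjoint.norm_map A
  have hvnorm : ‖v‖ ≤ 4 * α ^ 2 * β * (M * ‖u‖) := by
    rw [hv, norm_neg, norm_smul]
    have h1 : ‖(ContinuousLinearMap.adjoint A) u‖ ≤ M * ‖u‖ := by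
      calc ‖(ContinuousLinearMap.adjoint A) u‖
          ≤ ‖ContinuousLinearMap.adjoint A‖ * ‖u‖ := (ContinuousLinearMap.adjoint A).le_opNorm u
        _ ≤ M * ‖u‖ := by
            rw [hAadjnorm]; exact mul_le_mul_of_nonneg_right (hM θ₀) (norm_nonneg u)
    have h2 : ‖(4 * α ^ 2 * β : ℝ)‖ = 4 * α ^ 2 * β := by
      rw [Real.norm_eq_abs, abs_of_pos]; positivity
    rw [h2]
    exact mul_le_mul_of_nonneg_left h1 (by positivity)
  -- descent
  have hdesc := descent G L₀ hG hGLip θ₀ v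
  have harith := arith_aux α β M L₀ hα hβ hαβ
  have hkey : G (θ yhat) ≤ G θ₀ - 2 * α ^ 2 * β * ‖u‖ ^ 2 := by
    rw [hθyhat]
    refine harith (G θ₀) _ ‖u‖ ‖v‖ (norm_nonneg u) (norm_nonneg v) hvnorm ?_
    rw [← hinner] at *
    linarith [hdesc]
  have hmain : G (θ yhat) ≤ G θ₀ := by
    have h5 : 0 ≤ 2 * α ^ 2 * β * ‖u‖ ^ 2 := by positivity
    linarith
  refine ⟨by rw [hθytil]; exact hmain, by rw [hθytil], ?_, ?_⟩
  · -- equality → gradient = 0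
    intro heq
    have hu0 : u = 0 := by
      by_contra hne
      have hun : 0 < 2 * α ^ 2 * β * ‖u‖ ^ 2 := by
        have : 0 < ‖u‖ := norm_pos_iff.mpr hne
        positivity
      linarith [heq ▸ hkey]
    rw [hgradH, hu0, smul_zero]
  · -- gradient = 0 → equality
    intro hg0
    have hy : yhat = ytil := by rw [hyhat, hg0, smul_zero, sub_zero]
    rw [hy, hθytil]
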